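/- Let M₁, M₂, M₃ be pairwise commuting Hermitian operators with eigenvalues ±1 (involutions). Then for any density matrix ρ, Tr(ρ M₁M₂) ≥ Tr(ρ M₁M₃) + Tr(ρ M₂M₃) − 1. -/

import Mathlib

open Matrix
open scoped ComplexOrder

lemma trace_mul_psd_nonneg {n : ℕ} {P Q : Matrix (Fin n) (Fin n) ℂ}
    (hP : P.PosSemidef) (hQ : Q.PosSemidef) : 0 ≤ (P * Q).trace := by
  have posSemidef_iff_eq_transpose_mul_self : ∀ {A : Matrix (Fin n) (Fin n) ℂ},
      A.PosSemidef → ∃ B : Matrix (Fin n) (Fin n) ℂ, A = Bᴴ * B := by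
    open scoped MatrixOrder in
    intro A hA
    obtain ⟨B, rfl⟩ := CStarAlgebra.nonneg_iff_eq_star_mul_self.mp hA.nonneg
    exact ⟨B, rfl⟩
  obtain ⟨B, rfl⟩ := posSemidef_iff_eq_transpose_mul_self hP
  obtain ⟨C, rfl⟩ := posSemidef_iff_eq_transpose_mul_self hQ
  have : (Bᴴ * B * (Cᴴ * C)).trace = ((B * Cᴴ)ᴴ * (B * Cᴴ)).trace := by
    rw [conjTranspose_mul, conjTranspose_conjTranspose,
      ← Matrix.mul_assoc, Matrix.trace_mul_cycle]
    simp only [Matrix.mul_assoc]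
  rw [this, Matrix.trace]
  apply Finset.sum_nonneg
  intro j _
  simp only [diag_apply, mul_apply, conjTranspose_apply]
  exact Finset.sum_nonneg fun i _ => star_mul_self_nonneg _

lemma aux_trace_nonneg {n : ℕ} (A B ρ : Matrix (Fin n) (Fin n) ℂ)
    (hAH : Aᴴ = A) (hBH : Bᴴ = B) (hA2 : A * A = 1) (hB2 : B * B = 1)
    (hABc : A * B = B * A) (hρ : ρ.PosSemidef) :
    0 ≤ (ρ * (1 - A - B + B * A)).trace.re := by
  set P := (1 : Matrix (Fin n) (Fin n) ℂ) - A with hP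
  set Q := (1 : Matrix (Fin n) (Fin n) ℂ) - B with hQ
  have hPH : Pᴴ = P := by rw [hP, conjTranspose_sub, conjTranspose_one, hAH]
  have hQH : Qᴴ = Q := by rw [hQ, conjTranspose_sub, conjTranspose_one, hBH]
  have hN : (P * (Q * Q) * P).PosSemidef := by
    have h := (posSemidef_conjTranspose_mul_self Q).mul_mul_conjTranspose_same P
    rwa [hQH, hPH] at h
  have hPQ : P * Q = Q * P := by
    rw [hP, hQ]
    simp only [sub_mul, mul_sub, Matrix.one_mul, Matrix.mul_one, hABc]
    abel
  have hQQ : Q * Q = (2 : ℂ) • Q := by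
    rw [hQ]
    simp only [sub_mul, mul_sub, Matrix.one_mul, Matrix.mul_one, hB2]
    module
  have hPP : P * P = (2 : ℂ) • P := by
    rw [hP]
    simp only [sub_mul, mul_sub, Matrix.one_mul, Matrix.mul_one, hA2]
    module
  have hQP : Q * P = 1 - A - B + B * A := by
    rw [hP, hQ]
    simp only [sub_mul, mul_sub, Matrix.one_mul, Matrix.mul_one]
    module
  have hkey : P * (Q * Q) * P = (4 : ℂ) • (1 - A - B + B * A) := by
    rw [hQQ, Matrix.mul_smul, Matrix.smul_mul, Matrix.mul_assoc, ← hPQ,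
      ← Matrix.mul_assoc, hPP, Matrix.smul_mul, smul_smul, hPQ, hQP]
    norm_num
  have htrpos := trace_mul_psd_nonneg hρ hN
  rw [hkey, Matrix.mul_smul, trace_smul] at htrpos
  have hre := (Complex.le_def.mp htrpos).1
  rw [smul_eq_mul] at hre
  simp only [Complex.zero_re, Complex.mul_re] at hre
  norm_num at hre
  linarith

theorem commuting_involutions_triangle_bound (d : ℕ)
    (M₁ M₂ M₃ : Matrix (Fin d) (Fin d) ℂ)
    (h₁ : M₁.IsHermitian) (h₂ : M₂.IsHermitian) (h₃ : M₃.IsHermitian)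
    (hinv₁ : M₁ * M₁ = 1) (hinv₂ : M₂ * M₂ = 1) (hinv₃ : M₃ * M₃ = 1)
    (hc₁₂ : M₁ * M₂ = M₂ * M₁) (hc₁₃ : M₁ * M₃ = M₃ * M₁) (hc₂₃ : M₂ * M₃ = M₃ * M₂)
    (ρ : Matrix (Fin d) (Fin d) ℂ)
    (hρ : ρ.PosSemidef) (htr : ρ.trace = 1) :
    ((ρ * (M₁ * M₂)).trace.re) ≥
      ((ρ * (M₁ * M₃)).trace.re) + ((ρ * (M₂ * M₃)).trace.re) - 1 := by
  have hA2 : (M₁ * M₃) * (M₁ * M₃) = 1 := by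
    rw [Matrix.mul_assoc, ← Matrix.mul_assoc M₃, ← hc₁₃, Matrix.mul_assoc,
      hinv₃, Matrix.mul_one, hinv₁]
  have hB2 : (M₂ * M₃) * (M₂ * M₃) = 1 := by
    rw [Matrix.mul_assoc, ← Matrix.mul_assoc M₃, ← hc₂₃, Matrix.mul_assoc,
      hinv₃, Matrix.mul_one, hinv₂]
  have hBA : (M₂ * M₃) * (M₁ * M₃) = M₁ * M₂ := by
    rw [Matrix.mul_assoc, ← Matrix.mul_assoc M₃, ← hc₁₃, Matrix.mul_assoc M₁,
      hinv₃, Matrix.mul_one, hc₁₂]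
  have hAB : (M₁ * M₃) * (M₂ * M₃) = M₁ * M₂ := by
    rw [Matrix.mul_assoc, ← Matrix.mul_assoc M₃, ← hc₂₃, Matrix.mul_assoc,
      hinv₃, Matrix.mul_one]
  have hAH : (M₁ * M₃)ᴴ = M₁ * M₃ := by
    rw [conjTranspose_mul, h₁, h₃, ← hc₁₃]
  have hBH : (M₂ * M₃)ᴴ = M₂ * M₃ := by
    rw [conjTranspose_mul, h₂, h₃, ← hc₂₃]
  have key := aux_trace_nonneg (M₁ * M₃) (M₂ * M₃) ρ hAH hBH hA2 hB2
    (hAB.trans hBA.symm) hρ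
  rw [hBA] at key
  have hexp : (ρ * (1 - M₁ * M₃ - M₂ * M₃ + M₁ * M₂)).trace
      = 1 - (ρ * (M₁ * M₃)).trace - (ρ * (M₂ * M₃)).trace + (ρ * (M₁ * M₂)).trace := by
    simp only [Matrix.mul_add, Matrix.mul_sub, Matrix.mul_one, trace_add, trace_sub, htr]
  rw [hexp] at key
  simp only [Complex.add_re, Complex.sub_re, Complex.one_re] at key
  linarith
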